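/- Let G be a group, ρ: G → Sp(1) an irreducible projective representation, and α, β: G → {±1} group homomorphisms with α ≠ 1, β ≠ 1, α ≠ β. Suppose u, v ∈ Sp(1) satisfy α(g)ρ(g) = u ρ(g) u⁻¹ and β(g)ρ(g) = v ρ(g) v⁻¹ for all g ∈ G. Then u and v anticommute: u·v = −v·u. -/

import Mathlib

noncomputable section

open Quaternion

/-- A projective representation of `G` in the group `Sp(1)` of unit quaternions:
a function with values of norm one such that `ρ(gh)ρ(h)⁻¹ρ(g)⁻¹ ∈ {±1}`. -/
def IsProjRep {G : Type*} [Group G] (ρ : G → ℍ[ℝ]) : Prop :=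
  (∀ g : G, ‖ρ g‖ = 1) ∧
    ∀ g h : G, ρ (g * h) * (ρ h)⁻¹ * (ρ g)⁻¹ = 1 ∨ ρ (g * h) * (ρ h)⁻¹ * (ρ g)⁻¹ = -1

/-- A homomorphism from `G` into the subgroup `{±1}` of unit quaternions. -/
def IsSignHom {G : Type*} [Group G] (χ : G → ℍ[ℝ]) : Prop :=
  (∀ g : G, χ g = 1 ∨ χ g = -1) ∧ ∀ g h : G, χ (g * h) = χ g * χ h

/-- A projective representation `ρ` is irreducible if the centralizer of its image in `Sp(1)`
is `{±1}`. -/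
def IsIrred {G : Type*} [Group G] (ρ : G → ℍ[ℝ]) : Prop :=
  ∀ q : ℍ[ℝ], ‖q‖ = 1 → (∀ g : G, q * ρ g = ρ g * q) → q = 1 ∨ q = -1

def qi : ℍ[ℝ] := ⟨0, 1, 0, 0⟩
def qj : ℍ[ℝ] := ⟨0, 0, 1, 0⟩
def qk : ℍ[ℝ] := ⟨0, 0, 0, 1⟩

/-- The quaternion group `Q8 = {±1, ±i, ±j, ±k}` inside the unit quaternions. -/
def Q8 : Set ℍ[ℝ] := {1, -1, qi, -qi, qj, -qj, qk, -qk}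

/-- If `ρ` is irreducible and `u`, `v` conjugate `ρ` to its twists by distinct nontrivial
sign homomorphisms `α` and `β`, then `u` and `v` anticommute. -/
private lemma ac_mul {x y r : ℍ[ℝ]} (hx : x * r = -(r * x)) (hy : y * r = -(r * y)) :
    (x*y) * r = r * (x*y) := by
  calc (x*y)*r = x * (y * r) := by rw [mul_assoc]
  _ = x * -(r * y) := by rw [hy]
  _ = (-(x * r)) * y := by rw [mul_neg, neg_mul, mul_assoc]
  _ = (r * x) * y := by rw [hx, neg_neg]
  _ = r * (x*y) := by rw [mul_assoc]

private lemma cm_ac {x y r : ℍ[ℝ]} (hx : x * r = r * x) (hy : y * r = -(r * y)) :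
    (x*y) * r = -(r * (x*y)) := by
  calc (x*y)*r = x * (y * r) := by rw [mul_assoc]
  _ = x * -(r * y) := by rw [hy]
  _ = (-(x * r)) * y := by rw [mul_neg, neg_mul, mul_assoc]
  _ = -((r * x) * y) := by rw [hx, neg_mul]
  _ = -(r * (x*y)) := by rw [mul_assoc]

private lemma ac_cm {x y r : ℍ[ℝ]} (hx : x * r = -(r * x)) (hy : y * r = r * y) :
    (x*y) * r = -(r * (x*y)) := by
  calc (x*y)*r = x * (y * r) := by rw [mul_assoc]
  _ = x * (r * y) := by rw [hy]
  _ = (x * r) * y := by rw [mul_assoc]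
  _ = -((r * x) * y) := by rw [hx, neg_mul]
  _ = -(r * (x*y)) := by rw [mul_assoc]

private lemma ac_inv {x r : ℍ[ℝ]} (hx0 : x ≠ 0) (h : x * r = -(r * x)) :
    x⁻¹ * r = -(r * x⁻¹) := by
  have h' : r * x = -(x * r) := by rw [h, neg_neg]
  have e : x⁻¹ * r = x⁻¹ * ((r * x) * x⁻¹) := by rw [mul_inv_cancel_right₀ hx0]
  rw [e, h']
  simp [neg_mul, mul_neg, ← mul_assoc, inv_mul_cancel_left₀ hx0]

/-- A pure imaginary statement: a unit quaternion whose square is `±1` and which is not `±1`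
must be pure imaginary with square `-1`. -/
private lemma sq_neg_one_of_unit {u : ℍ[ℝ]} (hu : ‖u‖ = 1)
    (h2 : u * u = 1 ∨ u * u = -1) (hne1 : u ≠ 1) (hne2 : u ≠ -1) :
    u.re = 0 ∧ u * u = -1 := by
  have hn : u.re^2 + u.imI^2 + u.imJ^2 + u.imK^2 = 1 := by
    have h1 : normSq u = 1 := by rw [normSq_eq_norm_mul_self, hu, one_mul]
    rw [normSq_def'] at h1
    linarith
  rcases h2 with h2 | h2
  · exfalso
    have hre := congrArg QuaternionAlgebra.re h2
    have hI := congrArg QuaternionAlgebra.imI h2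
    have hJ := congrArg QuaternionAlgebra.imJ h2
    have hK := congrArg QuaternionAlgebra.imK h2
    simp only [Quaternion.re_mul, Quaternion.imI_mul, Quaternion.imJ_mul, Quaternion.imK_mul,
      Quaternion.re_one, Quaternion.imI_one, Quaternion.imJ_one, Quaternion.imK_one] at hre hI hJ hK
    have hI0 : u.imI = 0 := by nlinarith [sq_nonneg u.imI, sq_nonneg u.imJ, sq_nonneg u.imK]
    have hJ0 : u.imJ = 0 := by nlinarith [sq_nonneg u.imI, sq_nonneg u.imJ, sq_nonneg u.imK]
    have hK0 : u.imK = 0 := by nlinarith [sq_nonneg u.imI, sq_nonneg u.imJ, sq_nonneg u.imK]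
    have hre2 : (u.re - 1) * (u.re + 1) = 0 := by nlinarith
    rcases mul_eq_zero.mp hre2 with h | h
    · exact hne1 (by ext <;> simp [hI0, hJ0, hK0] <;> linarith)
    · exact hne2 (by ext <;> simp [hI0, hJ0, hK0] <;> linarith)
  · refine ⟨?_, h2⟩
    have hre := congrArg QuaternionAlgebra.re h2
    simp only [Quaternion.re_mul, Quaternion.re_neg, Quaternion.re_one] at hre
    nlinarith [sq_nonneg u.re]

theorem conjugators_anticommute {G : Type*} [Group G] (ρ : G → ℍ[ℝ])
    (hρ : IsProjRep ρ) (hirr : IsIrred ρ)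
    (α β : G → ℍ[ℝ]) (hα : IsSignHom α) (hβ : IsSignHom β)
    (hα1 : ∃ g : G, α g ≠ 1) (hβ1 : ∃ g : G, β g ≠ 1) (hαβ : α ≠ β)
    (u v : ℍ[ℝ]) (hu : ‖u‖ = 1) (hv : ‖v‖ = 1)
    (huα : ∀ g : G, α g * ρ g = u * ρ g * u⁻¹)
    (hvβ : ∀ g : G, β g * ρ g = v * ρ g * v⁻¹) :
    u * v = -(v * u) := by
  have hu0 : u ≠ 0 := by intro h; rw [h, norm_zero] at hu; norm_num at hu
  have hv0 : v ≠ 0 := by intro h; rw [h, norm_zero] at hv; norm_num at hv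
  have hρ0 : ∀ g : G, ρ g ≠ 0 := by
    intro g h; have := hρ.1 g; rw [h, norm_zero] at this; norm_num at this
  -- sign-commutation facts
  have hU : ∀ g : G, u * ρ g = ρ g * u ∨ u * ρ g = -(ρ g * u) := by
    intro g
    have h0 : α g * (ρ g * u) = u * ρ g := by
      calc α g * (ρ g * u) = (α g * ρ g) * u := by rw [mul_assoc]
      _ = (u * ρ g * u⁻¹) * u := by rw [huα g]
      _ = u * ρ g := by rw [inv_mul_cancel_right₀ hu0]
    rcases hα.1 g with h | h
    · left; rw [h, one_mul] at h0; exact h0.symm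
    · right; rw [h, neg_one_mul] at h0; exact h0.symm
  have hV : ∀ g : G, v * ρ g = ρ g * v ∨ v * ρ g = -(ρ g * v) := by
    intro g
    have h0 : β g * (ρ g * v) = v * ρ g := by
      calc β g * (ρ g * v) = (β g * ρ g) * v := by rw [mul_assoc]
      _ = (v * ρ g * v⁻¹) * v := by rw [hvβ g]
      _ = v * ρ g := by rw [inv_mul_cancel_right₀ hv0]
    rcases hβ.1 g with h | h
    · left; rw [h, one_mul] at h0; exact h0.symm
    · right; rw [h, neg_one_mul] at h0; exact h0.symm
  have hvu0 : v * u ≠ 0 := mul_ne_zero hv0 hu0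
  set q : ℍ[ℝ] := (v * u)⁻¹ * (u * v) with hqdef
  have hqcomm : ∀ g : G, q * ρ g = ρ g * q := by
    intro g
    rcases hU g with h1 | h1 <;> rcases hV g with h2 | h2
    · have c1 : (u*v) * ρ g = ρ g * (u*v) := by
        rw [mul_assoc, h2, ← mul_assoc, h1, mul_assoc]
      have c2 : (v*u) * ρ g = ρ g * (v*u) := by
        rw [mul_assoc, h1, ← mul_assoc, h2, mul_assoc]
      have c3 : (v*u)⁻¹ * ρ g = ρ g * (v*u)⁻¹ := Commute.inv_left₀ c2
      rw [hqdef, mul_assoc, c1, ← mul_assoc, c3, mul_assoc]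
    · have c1 : (u*v) * ρ g = -(ρ g * (u*v)) := cm_ac h1 h2
      have c2 : (v*u) * ρ g = -(ρ g * (v*u)) := ac_cm h2 h1
      have c3 : (v*u)⁻¹ * ρ g = -(ρ g * (v*u)⁻¹) := ac_inv hvu0 c2
      exact ac_mul c3 c1
    · have c1 : (u*v) * ρ g = -(ρ g * (u*v)) := ac_cm h1 h2
      have c2 : (v*u) * ρ g = -(ρ g * (v*u)) := cm_ac h2 h1
      have c3 : (v*u)⁻¹ * ρ g = -(ρ g * (v*u)⁻¹) := ac_inv hvu0 c2
      exact ac_mul c3 c1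
    · have c1 : (u*v) * ρ g = ρ g * (u*v) := ac_mul h1 h2
      have c2 : (v*u) * ρ g = ρ g * (v*u) := ac_mul h2 h1
      have c3 : (v*u)⁻¹ * ρ g = ρ g * (v*u)⁻¹ := Commute.inv_left₀ c2
      rw [hqdef, mul_assoc, c1, ← mul_assoc, c3, mul_assoc]
  have hqnorm : ‖q‖ = 1 := by
    rw [hqdef, norm_mul, norm_inv, norm_mul, norm_mul, hu, hv]; norm_num
  rcases hirr q hqnorm hqcomm with hq1 | hq1
  · -- q = 1 : u and v commute, derive a contradiction
    exfalso
    have hcomm : u * v = v * u := by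
      have := congrArg (fun x => (v*u) * x) hq1
      simp only [hqdef, mul_inv_cancel_left₀ hvu0, mul_one] at this
      exact this
    -- u ≠ ±1, v ≠ ±1
    have htrivα : (u = 1 ∨ u = -1) → ∀ g : G, α g = 1 := by
      rintro (h | h) g
      · have := huα g
        rw [h] at this
        simp only [one_mul, inv_one, mul_one] at this
        exact mul_right_cancel₀ (hρ0 g) (by rw [this, one_mul])
      · have := huα g
        rw [h] at this
        simp only [neg_mul, inv_neg, inv_one, mul_neg, mul_one, neg_neg, one_mul] at this
        exact mul_right_cancel₀ (hρ0 g) (by rw [this, one_mul])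
    have htrivβ : (v = 1 ∨ v = -1) → ∀ g : G, β g = 1 := by
      rintro (h | h) g
      · have := hvβ g
        rw [h] at this
        simp only [one_mul, inv_one, mul_one] at this
        exact mul_right_cancel₀ (hρ0 g) (by rw [this, one_mul])
      · have := hvβ g
        rw [h] at this
        simp only [neg_mul, inv_neg, inv_one, mul_neg, mul_one, neg_neg, one_mul] at this
        exact mul_right_cancel₀ (hρ0 g) (by rw [this, one_mul])
    obtain ⟨g1, hg1⟩ := hα1
    obtain ⟨g2, hg2⟩ := hβ1
    have hune1 : u ≠ 1 := fun h => hg1 (htrivα (Or.inl h) g1)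
    have hune2 : u ≠ -1 := fun h => hg1 (htrivα (Or.inr h) g1)
    have hvne1 : v ≠ 1 := fun h => hg2 (htrivβ (Or.inl h) g2)
    have hvne2 : v ≠ -1 := fun h => hg2 (htrivβ (Or.inr h) g2)
    -- u² = ±1, v² = ±1
    have hu2comm : ∀ g : G, (u*u) * ρ g = ρ g * (u*u) := by
      intro g
      rcases hU g with h1 | h1
      · rw [mul_assoc, h1, ← mul_assoc, h1, mul_assoc]
      · exact ac_mul h1 h1
    have hv2comm : ∀ g : G, (v*v) * ρ g = ρ g * (v*v) := by
      intro g
      rcases hV g with h1 | h1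
      · rw [mul_assoc, h1, ← mul_assoc, h1, mul_assoc]
      · exact ac_mul h1 h1
    have hu2 := hirr (u*u) (by rw [norm_mul, hu, one_mul]) hu2comm
    have hv2 := hirr (v*v) (by rw [norm_mul, hv, one_mul]) hv2comm
    obtain ⟨hure, hu2'⟩ := sq_neg_one_of_unit hu hu2 hune1 hune2
    obtain ⟨hvre, _⟩ := sq_neg_one_of_unit hv hv2 hvne1 hvne2
    -- u*v is real
    have hIc := congrArg QuaternionAlgebra.imI hcomm
    have hJc := congrArg QuaternionAlgebra.imJ hcomm
    have hKc := congrArg QuaternionAlgebra.imK hcomm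
    simp only [Quaternion.imI_mul, Quaternion.imJ_mul, Quaternion.imK_mul, hure, hvre,
      zero_mul, mul_zero, zero_add, add_zero] at hIc hJc hKc
    have hreal : u * v = (((u*v).re : ℝ) : ℍ[ℝ]) := by
      ext
      · simp
      · simp only [Quaternion.imI_coe, Quaternion.imI_mul, hure, hvre, zero_mul, mul_zero,
          zero_add, add_zero]
        linarith
      · simp only [Quaternion.imJ_coe, Quaternion.imJ_mul, hure, hvre, zero_mul, mul_zero,
          zero_add, add_zero]
        linarith
      · simp only [Quaternion.imK_coe, Quaternion.imK_mul, hure, hvre, zero_mul, mul_zero,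
          zero_add, add_zero]
        linarith
    set t : ℝ := (u*v).re with htdef
    -- v = (-t) • u
    have hveq : v = ((-t : ℝ) : ℍ[ℝ]) * u := by
      have h1 : v = (-u) * (u * v) := by
        rw [← mul_assoc, neg_mul, hu2', neg_neg, one_mul]
      rw [h1, hreal, Quaternion.coe_neg, neg_mul, neg_mul, neg_inj]
      exact ((Quaternion.coe_commute t u).eq).symm
    have htabs : |(-t : ℝ)| = 1 := by
      have := congrArg norm hveq
      rw [hv, norm_mul, hu, mul_one, Quaternion.norm_coe, Real.norm_eq_abs] at this
      exact this.symm
    have hteq : (-t : ℝ) = 1 ∨ (-t : ℝ) = -1 := by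
      rcases abs_eq (by norm_num : (0:ℝ) ≤ 1) |>.mp htabs with h | h
      · exact Or.inl h
      · exact Or.inr h
    -- v = u or v = -u, hence conjugations agree, hence α = β
    have hv' : v = u ∨ v = -u := by
      rcases hteq with h | h
      · left; rw [hveq, h]; push_cast; rw [one_mul]
      · right; rw [hveq, h]; push_cast; rw [neg_one_mul]
    have hsame : ∀ g : G, v * ρ g * v⁻¹ = u * ρ g * u⁻¹ := by
      intro g
      rcases hv' with h | h
      · rw [h]
      · simp [h, inv_neg, neg_mul, mul_neg]
    have : α = β := by
      funext g
      have h1 : α g * ρ g = β g * ρ g := by rw [huα g, hvβ g, hsame g]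
      exact mul_right_cancel₀ (hρ0 g) h1
    exact hαβ this
  · -- q = -1 : the desired anticommutation
    have := congrArg (fun x => (v*u) * x) hq1
    simp only [hqdef, mul_inv_cancel_left₀ hvu0, mul_neg, mul_one] at this
    exact this
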